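/- Under the homotopy CGM for affinely constrained problems with exact linear minimization oracle, the following one-step recursion holds for every k ≥ 1: F_{β_k}(x_{k+1}) − f⋆ ≤ (1 − η_k)(F_{β_{k−1}}(x_k) − f⋆) + (η_k²/2) D² (L_f + ‖A‖²/β_k), where β_0 = β₀ (that is, β_j = β₀/√(j+1) for j ≥ 0). -/

import Mathlib

open RealInnerProductSpace

section aux
variable {E : Type*} [NormedAddCommGroup E] [InnerProductSpace ℝ E] [CompleteSpace E]

private lemma line_hasDerivAt (x w : E) (t : ℝ) :
    HasDerivAt (fun t : ℝ => x + t • w) w t := by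
  simpa using ((hasDerivAt_id t).smul_const w).const_add x

private lemma comp_line_hasDerivAt (f : E → ℝ) (f' : E → E)
    (hf_grad : ∀ z, HasGradientAt f (f' z) z) (x w : E) (t : ℝ) :
    HasDerivAt (fun t : ℝ => f (x + t • w)) ⟪f' (x + t • w), w⟫ t := by
  have h1 := (hf_grad (x + t • w)).hasFDerivAt.comp_hasDerivAt t (line_hasDerivAt x w t)
  simpa [Function.comp_def] using h1

private lemma grad_convex_ineq (f : E → ℝ) (f' : E → E)
    (hf_cvx : ConvexOn ℝ Set.univ f)
    (hf_grad : ∀ z, HasGradientAt f (f' z) z) (x y : E) :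
    f x + ⟪f' x, y - x⟫ ≤ f y := by
  set w := y - x with hw
  have hψ : ConvexOn ℝ Set.univ (fun t : ℝ => f (x + t • w)) := by
    have h := hf_cvx.comp_affineMap (AffineMap.lineMap x y : ℝ →ᵃ[ℝ] E)
    have he : (fun t : ℝ => f (x + t • w)) = (f ∘ (AffineMap.lineMap x y : ℝ →ᵃ[ℝ] E)) := by
      funext t
      simp [AffineMap.lineMap_apply, hw, add_comm]
    rw [he]
    simpa using h
  have hd := (comp_line_hasDerivAt f f' hf_grad x w 0).hasDerivWithinAt (s := Set.univ)
  have hslope := hψ.le_slope_of_hasDerivWithinAt (Set.mem_univ 0) (Set.mem_univ 1)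
    zero_lt_one (by simpa using hd)
  rw [slope_def_field] at hslope
  simp only [zero_smul, add_zero, one_smul] at hslope
  have hxy : x + w = y := by simp [hw]
  rw [hxy] at hslope
  simp at hslope
  linarith

private lemma descent_ineq (f : E → ℝ) (f' : E → E)
    (hf_grad : ∀ z, HasGradientAt f (f' z) z)
    (L : ℝ) (hL : 0 ≤ L) (hlip : ∀ a b, ‖f' a - f' b‖ ≤ L * ‖a - b‖) (x y : E) :
    f y ≤ f x + ⟪f' x, y - x⟫ + L / 2 * ‖y - x‖ ^ 2 := by
  set w := y - x with hw
  have hf'cont : Continuous f' := by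
    have hl : LipschitzWith (Real.toNNReal L) f' := by
      apply LipschitzWith.of_dist_le_mul
      intro a b
      rw [dist_eq_norm, dist_eq_norm, Real.coe_toNNReal L hL]
      exact hlip a b
    exact hl.continuous
  have hδcont : Continuous (fun t : ℝ => ⟪f' (x + t • w), w⟫) := by
    apply Continuous.inner
    · exact hf'cont.comp (by continuity)
    · exact continuous_const
  have hFTC : f (x + (1:ℝ) • w) - f (x + (0:ℝ) • w)
      = ∫ t in (0:ℝ)..1, ⟪f' (x + t • w), w⟫ :=
    (intervalIntegral.integral_eq_sub_of_hasDerivAt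
      (fun t _ => comp_line_hasDerivAt f f' hf_grad x w t)
      (hδcont.intervalIntegrable 0 1)).symm
  simp only [one_smul, zero_smul, add_zero] at hFTC
  have hyx : x + w = y := by simp [hw]
  rw [hyx] at hFTC
  have hmono : ∫ t in (0:ℝ)..1, ⟪f' (x + t • w), w⟫
      ≤ ∫ t in (0:ℝ)..1, (⟪f' x, w⟫ + L * ‖w‖ ^ 2 * t) := by
    apply intervalIntegral.integral_mono_on (by norm_num)
      (hδcont.intervalIntegrable 0 1)
      ((by continuity : Continuous fun t : ℝ => ⟪f' x, w⟫ + L * ‖w‖ ^ 2 * t).intervalIntegrable 0 1)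
    intro t ht
    have h1 : ⟪f' (x + t • w) - f' x, w⟫ ≤ ‖f' (x + t • w) - f' x‖ * ‖w‖ :=
      real_inner_le_norm _ _
    have h2 : ‖f' (x + t • w) - f' x‖ ≤ L * (t * ‖w‖) := by
      have := hlip (x + t • w) x
      simpa [norm_smul, abs_of_nonneg ht.1] using this
    have h3 : ⟪f' (x + t • w) - f' x, w⟫ = ⟪f' (x + t • w), w⟫ - ⟪f' x, w⟫ :=
      inner_sub_left _ _ _
    nlinarith [norm_nonneg w, mul_le_mul_of_nonneg_right h2 (norm_nonneg w)]
  have hrhs : ∫ t in (0:ℝ)..1, (⟪f' x, w⟫ + L * ‖w‖ ^ 2 * t)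
      = ⟪f' x, w⟫ + L / 2 * ‖w‖ ^ 2 := by
    rw [intervalIntegral.integral_add (intervalIntegrable_const)
      ((intervalIntegral.intervalIntegrable_id).const_mul _),
      intervalIntegral.integral_const_mul, integral_id]
    simp
    ring
  linarith [hFTC, hmono, hrhs]

end aux

section proj
variable {G : Type*} [NormedAddCommGroup G] [InnerProductSpace ℝ G]

private lemma proj_var_ineq {K : Set G} (hK_cvx : Convex ℝ K)
    (projK : G → G) (hprojK : ∀ z, projK z ∈ K ∧ ∀ y ∈ K, dist z (projK z) ≤ dist z y)
    (z : G) : ∀ u ∈ K, ⟪z - projK z, u - projK z⟫ ≤ 0 := by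
  haveI : Nonempty K := ⟨⟨projK z, (hprojK z).1⟩⟩
  have h1 : ‖z - projK z‖ = ⨅ w : K, ‖z - w‖ := by
    apply le_antisymm
    · apply le_ciInf
      rintro ⟨w, hw⟩
      simpa [dist_eq_norm] using (hprojK z).2 w hw
    · have hb : BddBelow (Set.range fun w : K => ‖z - (w : G)‖) := by
        refine ⟨0, ?_⟩
        rintro a ⟨w, rfl⟩
        exact norm_nonneg _
      exact ciInf_le hb ⟨projK z, (hprojK z).1⟩
  exact (norm_eq_iInf_iff_real_inner_le_zero hK_cvx (hprojK z).1).1 h1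

private lemma infDist_eq_proj {K : Set G}
    (projK : G → G) (hprojK : ∀ z, projK z ∈ K ∧ ∀ y ∈ K, dist z (projK z) ≤ dist z y)
    (z : G) : Metric.infDist z K = ‖z - projK z‖ := by
  haveI : Nonempty K := ⟨⟨projK z, (hprojK z).1⟩⟩
  rw [← dist_eq_norm]
  apply le_antisymm (Metric.infDist_le_dist_of_mem (hprojK z).1)
  rw [Metric.infDist_eq_iInf]
  apply le_ciInf
  rintro ⟨w, hw⟩
  exact (hprojK z).2 w hw

end proj

private lemma sqrt_claim (r : ℝ) (hr : 1 ≤ r) :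
    (r - 3) * Real.sqrt (r + 1) ≤ (r - 1) * Real.sqrt r := by
  have hr0 : (0:ℝ) < r := by linarith
  have hsk : 0 < Real.sqrt r := Real.sqrt_pos.mpr hr0
  have hsk1 : 0 < Real.sqrt (r + 1) := Real.sqrt_pos.mpr (by linarith)
  rcases le_or_gt r 3 with h3 | h3
  · have l1 : (r - 3) * Real.sqrt (r + 1) ≤ 0 :=
      mul_nonpos_of_nonpos_of_nonneg (by linarith) hsk1.le
    have l2 : 0 ≤ (r - 1) * Real.sqrt r := mul_nonneg (by linarith) hsk.le
    linarith
  · have hs2 : Real.sqrt (r + 1) ^ 2 = r + 1 := Real.sq_sqrt (by linarith)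
    have hs2' : Real.sqrt r ^ 2 = r := Real.sq_sqrt hr0.le
    have hsq : ((r - 3) * Real.sqrt (r + 1)) ^ 2 ≤ ((r - 1) * Real.sqrt r) ^ 2 := by
      rw [mul_pow, mul_pow, hs2, hs2']
      nlinarith
    have lpos : 0 ≤ (r - 3) * Real.sqrt (r + 1) := mul_nonneg (by linarith) hsk1.le
    have rpos : 0 ≤ (r - 1) * Real.sqrt r := mul_nonneg (by linarith) hsk.le
    nlinarith [hsq, lpos, rpos]

set_option maxHeartbeats 1000000 in
theorem stmt19
    (n d : ℕ)
    (X : Set (EuclideanSpace ℝ (Fin n)))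
    (hX_ne : X.Nonempty) (hX_cpt : IsCompact X) (hX_cvx : Convex ℝ X)
    (f : EuclideanSpace ℝ (Fin n) → ℝ)
    (f' : EuclideanSpace ℝ (Fin n) → EuclideanSpace ℝ (Fin n))
    (hf_cvx : ConvexOn ℝ Set.univ f)
    (hf_grad : ∀ x, HasGradientAt f (f' x) x)
    (L_f : ℝ) (hLf : 0 ≤ L_f)
    (hf'_lip : ∀ x y, ‖f' x - f' y‖ ≤ L_f * ‖x - y‖)
    (A : EuclideanSpace ℝ (Fin n) →L[ℝ] EuclideanSpace ℝ (Fin d))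
    (K : Set (EuclideanSpace ℝ (Fin d)))
    (hK_ne : K.Nonempty) (hK_cl : IsClosed K) (hK_cvx : Convex ℝ K)
    (projK : EuclideanSpace ℝ (Fin d) → EuclideanSpace ℝ (Fin d))
    (hprojK : ∀ z, projK z ∈ K ∧ ∀ y ∈ K, dist z (projK z) ≤ dist z y)
    (fstar : ℝ)
    (hfstar : IsLeast (f '' {x | x ∈ X ∧ A x ∈ K}) fstar)
    (β₀ : ℝ) (hβ₀ : 0 < β₀)
    (x s v : ℕ → EuclideanSpace ℝ (Fin n))
    (hx1 : x 1 ∈ X)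
    (hv : ∀ k, 1 ≤ k → v k = (β₀ / Real.sqrt ((k:ℝ) + 1)) • f' (x k)
        + (ContinuousLinearMap.adjoint A) (A (x k) - projK (A (x k))))
    (hs_mem : ∀ k, 1 ≤ k → s k ∈ X)
    (hlmo : ∀ k, 1 ≤ k → ∀ z ∈ X, ⟪v k, s k⟫ ≤ ⟪v k, z⟫)
    (hupd : ∀ k, 1 ≤ k → x (k + 1) = x k + (2 / ((k:ℝ) + 1)) • (s k - x k)) :
    ∀ k, 1 ≤ k →
      f (x (k + 1)) + (Metric.infDist (A (x (k + 1))) K) ^ 2 / (2 * (β₀ / Real.sqrt ((k:ℝ) + 1))) - fstar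
        ≤ (1 - 2 / ((k:ℝ) + 1))
            * (f (x k) + (Metric.infDist (A (x k)) K) ^ 2 / (2 * (β₀ / Real.sqrt (k:ℝ))) - fstar)
          + ((2 / ((k:ℝ) + 1)) ^ 2 / 2) * (Metric.diam X) ^ 2
              * (L_f + ‖A‖ ^ 2 / (β₀ / Real.sqrt ((k:ℝ) + 1))) := by
  -- membership of iterates
  have hmemX : ∀ m, 1 ≤ m → x m ∈ X := by
    intro m hm
    induction m, hm using Nat.le_induction with
    | base => exact hx1
    | succ m hm ih =>
      rw [hupd m hm]
      have hm1 : (1:ℝ) ≤ (m:ℝ) := by exact_mod_cast hm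
      have hηm0 : (0:ℝ) ≤ 2 / ((m:ℝ) + 1) := by positivity
      have hηm1 : 2 / ((m:ℝ) + 1) ≤ 1 := by
        rw [div_le_one (by linarith)]; linarith
      have hc := hX_cvx ih (hs_mem m hm)
        (by linarith : (0:ℝ) ≤ 1 - 2 / ((m:ℝ) + 1)) hηm0 (by ring)
      convert hc using 1
      module
  intro k hk
  have hk1 : (1:ℝ) ≤ (k:ℝ) := by exact_mod_cast hk
  have hk0 : (0:ℝ) < (k:ℝ) := by linarith
  have hkp : (0:ℝ) < (k:ℝ) + 1 := by linarith
  have hsk : 0 < Real.sqrt (k:ℝ) := Real.sqrt_pos.mpr hk0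
  have hsk1 : 0 < Real.sqrt ((k:ℝ) + 1) := Real.sqrt_pos.mpr (by linarith)
  set b := β₀ / Real.sqrt ((k:ℝ) + 1) with hbdef
  set b' := β₀ / Real.sqrt (k:ℝ) with hb'def
  set η := 2 / ((k:ℝ) + 1) with hηdef
  have hb : 0 < b := div_pos hβ₀ hsk1
  have hb' : 0 < b' := div_pos hβ₀ hsk
  have hη0 : 0 < η := by rw [hηdef]; positivity
  have hη1 : η ≤ 1 := by rw [hηdef, div_le_one hkp]; linarith
  obtain ⟨xs, ⟨hxsX, hxsK⟩, hxsf⟩ := hfstar.1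
  have hxkX := hmemX k hk
  have hskX := hs_mem k hk
  set w := s k - x k with hwdef
  set p := projK (A (x k)) with hpdef
  have hpK : p ∈ K := (hprojK (A (x k))).1
  set dd := ‖A (x k) - p‖ with hdddef
  set I' := Metric.infDist (A (x (k + 1))) K with hI'def
  have hIeq : Metric.infDist (A (x k)) K = dd := by
    rw [hdddef, hpdef]
    exact infDist_eq_proj projK hprojK _
  have hDw : ‖w‖ ≤ Metric.diam X := by
    rw [hwdef, ← dist_eq_norm]
    exact Metric.dist_le_diam_of_mem hX_cpt.isBounded hskX hxkX
  have hdiff : x (k + 1) - x k = η • w := by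
    rw [hupd k hk]
    exact add_sub_cancel_left _ _
  -- descent inequality for f
  have h1 : f (x (k + 1)) ≤ f (x k) + η * ⟪f' (x k), w⟫ + L_f / 2 * (η ^ 2 * ‖w‖ ^ 2) := by
    have h := descent_ineq f f' hf_grad L_f hLf hf'_lip (x k) (x (k + 1))
    rw [hdiff, real_inner_smul_right, norm_smul, mul_pow, Real.norm_eq_abs, sq_abs] at h
    exact h
  -- expansion of the squared distance
  have h2 : I' ^ 2 ≤ dd ^ 2 + 2 * (η * ⟪A (x k) - p, A w⟫) + η ^ 2 * (‖A‖ ^ 2 * ‖w‖ ^ 2) := by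
    have hle : I' ≤ ‖A (x (k + 1)) - p‖ := by
      rw [hI'def, ← dist_eq_norm]
      exact Metric.infDist_le_dist_of_mem hpK
    have hsq : I' ^ 2 ≤ ‖A (x (k + 1)) - p‖ ^ 2 :=
      pow_le_pow_left₀ Metric.infDist_nonneg hle 2
    have hexp : A (x (k + 1)) - p = (A (x k) - p) + η • (A w) := by
      have hx' : x (k + 1) = x k + η • w := by
        rw [← hdiff]; abel
      rw [hx', map_add, map_smul]; abel
    rw [hexp, norm_add_sq_real, real_inner_smul_right, norm_smul, mul_pow, Real.norm_eq_abs, sq_abs] at hsq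
    have hAw : ‖A w‖ ≤ ‖A‖ * ‖w‖ := A.le_opNorm w
    have hAw2 : ‖A w‖ ^ 2 ≤ ‖A‖ ^ 2 * ‖w‖ ^ 2 := by
      have := mul_le_mul_of_nonneg_left hAw (norm_nonneg (A w))
      nlinarith [norm_nonneg (A w), norm_nonneg w, A.opNorm_nonneg]
    have hmul : η ^ 2 * ‖A w‖ ^ 2 ≤ η ^ 2 * (‖A‖ ^ 2 * ‖w‖ ^ 2) :=
      mul_le_mul_of_nonneg_left hAw2 (sq_nonneg η)
    rw [← hdddef] at hsq
    linarith
  -- LMO + convexity + projection inequality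
  have h6 : b * ⟪f' (x k), w⟫ + ⟪A (x k) - p, A w⟫ ≤ b * (fstar - f (x k)) - dd ^ 2 := by
    have hvk : v k = b • f' (x k) + (ContinuousLinearMap.adjoint A) (A (x k) - p) := by
      rw [hv k hk]
    have expand : ∀ z, ⟪v k, z⟫ = b * ⟪f' (x k), z⟫ + ⟪A (x k) - p, A z⟫ := by
      intro z
      rw [hvk, inner_add_left, real_inner_smul_left, ContinuousLinearMap.adjoint_inner_left]
    have hss : ⟪v k, w⟫ ≤ ⟪v k, xs - x k⟫ := by
      have h0 := hlmo k hk xs hxsX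
      rw [hwdef]
      rw [inner_sub_right, inner_sub_right]
      linarith
    rw [expand, expand] at hss
    have hgc : ⟪f' (x k), xs - x k⟫ ≤ fstar - f (x k) := by
      have := grad_convex_ineq f f' hf_cvx hf_grad (x k) xs
      rw [hxsf] at this
      linarith
    have hproj : ⟪A (x k) - p, A xs - p⟫ ≤ 0 := by
      rw [hpdef]
      exact proj_var_ineq hK_cvx projK hprojK (A (x k)) (A xs) hxsK
    have h5 : ⟪A (x k) - p, A (xs - x k)⟫ ≤ -dd ^ 2 := by
      have hAxs : A (xs - x k) = (A xs - p) - (A (x k) - p) := by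
        rw [map_sub]; abel
      rw [hAxs, inner_sub_right]
      have hself : ⟪A (x k) - p, A (x k) - p⟫ = dd ^ 2 := by
        rw [hdddef]; exact real_inner_self_eq_norm_sq _
      linarith
    have hmul := mul_le_mul_of_nonneg_left hgc hb.le
    linarith
  -- comparison of smoothing parameters
  have c8 : (1 - 2 * η) * b' ≤ (1 - η) * b := by
    have claim : ((k:ℝ) - 3) * Real.sqrt ((k:ℝ) + 1) ≤ ((k:ℝ) - 1) * Real.sqrt (k:ℝ) :=
      sqrt_claim (k:ℝ) hk1
    have key : ((k:ℝ) - 3) * Real.sqrt ((k:ℝ) + 1) * β₀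
        ≤ ((k:ℝ) - 1) * Real.sqrt (k:ℝ) * β₀ :=
      mul_le_mul_of_nonneg_right claim hβ₀.le
    have e1 : 1 - 2 * η = ((k:ℝ) - 3) / ((k:ℝ) + 1) := by
      rw [hηdef]; field_simp; ring
    have e2 : 1 - η = ((k:ℝ) - 1) / ((k:ℝ) + 1) := by
      rw [hηdef]; field_simp; ring
    rw [e1, e2, hbdef, hb'def, div_mul_div_comm, div_mul_div_comm,
      div_le_div_iff₀ (by positivity) (by positivity)]
    nlinarith [mul_le_mul_of_nonneg_right key hkp.le]
  -- final assembly
  rw [hIeq]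
  have hD2 : ‖w‖ ^ 2 ≤ Metric.diam X ^ 2 :=
    pow_le_pow_left₀ (norm_nonneg w) hDw 2
  have t1 : 0 ≤ 2 * b * b' * ((f (x k) + η * ⟪f' (x k), w⟫ + L_f / 2 * (η ^ 2 * ‖w‖ ^ 2))
      - f (x (k + 1))) :=
    mul_nonneg (by positivity) (by linarith)
  have t2 : 0 ≤ b' * ((dd ^ 2 + 2 * (η * ⟪A (x k) - p, A w⟫) + η ^ 2 * (‖A‖ ^ 2 * ‖w‖ ^ 2))
      - I' ^ 2) :=
    mul_nonneg hb'.le (by linarith)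
  have t3 : 0 ≤ 2 * b' * η * ((b * (fstar - f (x k)) - dd ^ 2)
      - (b * ⟪f' (x k), w⟫ + ⟪A (x k) - p, A w⟫)) :=
    mul_nonneg (by positivity) (by linarith)
  have t4 : 0 ≤ η ^ 2 * (b * L_f + ‖A‖ ^ 2) * b' * ((Metric.diam X) ^ 2 - ‖w‖ ^ 2) := by
    apply mul_nonneg
    · apply mul_nonneg
      · exact mul_nonneg (sq_nonneg η) (by positivity)
      · exact hb'.le
    · linarith
  have t5 : 0 ≤ dd ^ 2 * ((1 - η) * b - (1 - 2 * η) * b') :=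
    mul_nonneg (sq_nonneg dd) (by linarith)
  have hsum : 0 ≤ (2 * b * b' * ((f (x k) + η * ⟪f' (x k), w⟫ + L_f / 2 * (η ^ 2 * ‖w‖ ^ 2))
        - f (x (k + 1)))
      + b' * ((dd ^ 2 + 2 * (η * ⟪A (x k) - p, A w⟫) + η ^ 2 * (‖A‖ ^ 2 * ‖w‖ ^ 2)) - I' ^ 2)
      + 2 * b' * η * ((b * (fstar - f (x k)) - dd ^ 2)
        - (b * ⟪f' (x k), w⟫ + ⟪A (x k) - p, A w⟫))
      + η ^ 2 * (b * L_f + ‖A‖ ^ 2) * b' * ((Metric.diam X) ^ 2 - ‖w‖ ^ 2)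
      + dd ^ 2 * ((1 - η) * b - (1 - 2 * η) * b')) / (2 * b * b') :=
    div_nonneg (by linarith [t1, t2, t3, t4, t5]) (by positivity)
  have hid : ((1 - η) * (f (x k) + dd ^ 2 / (2 * b') - fstar)
        + (η ^ 2 / 2) * (Metric.diam X) ^ 2 * (L_f + ‖A‖ ^ 2 / b))
      - (f (x (k + 1)) + I' ^ 2 / (2 * b) - fstar)
      = (2 * b * b' * ((f (x k) + η * ⟪f' (x k), w⟫ + L_f / 2 * (η ^ 2 * ‖w‖ ^ 2))
        - f (x (k + 1)))
      + b' * ((dd ^ 2 + 2 * (η * ⟪A (x k) - p, A w⟫) + η ^ 2 * (‖A‖ ^ 2 * ‖w‖ ^ 2)) - I' ^ 2)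
      + 2 * b' * η * ((b * (fstar - f (x k)) - dd ^ 2)
        - (b * ⟪f' (x k), w⟫ + ⟪A (x k) - p, A w⟫))
      + η ^ 2 * (b * L_f + ‖A‖ ^ 2) * b' * ((Metric.diam X) ^ 2 - ‖w‖ ^ 2)
      + dd ^ 2 * ((1 - η) * b - (1 - 2 * η) * b')) / (2 * b * b') := by
    field_simp
    ring
  linarith [hsum, hid]
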